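/- Let T = (P,B) be a template of length t whose binary string B has exactly k zeros, and let σ be a pattern of length l > 0. If there exists an n such that R_{n,T} contains a permutation which contains σ as a pattern, then there also exists an m ≤ (l-1)(k+1)+1 such that R_{m,T} contains a permutation which contains σ as a pattern. -/

import Mathlib

/-- A *permutation word* of length `n`: a list that is a rearrangement of `1, 2, ..., n`
(where `n` is its length). -/
def IsPermWord (w : List ℕ) : Prop := w.Perm (List.range' 1 w.length)

/-- Two words are *order-isomorphic*: they have the same length and corresponding
entries compare in the same way. -/
def OrderIsoWord (u v : List ℕ) : Prop :=
  u.length = v.length ∧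
    ∀ (i j : ℕ) (hi : i < u.length) (hj : j < u.length)
      (hi' : i < v.length) (hj' : j < v.length),
      (u[i]'hi < u[j]'hj ↔ v[i]'hi' < v[j]'hj')

/-- `w` contains a copy of the pattern `σ`: some subsequence of `w` (given by increasing
indices) is order-isomorphic to `σ`. -/
def ContainsPattern (w σ : List ℕ) : Prop :=
  ∃ s : List ℕ, s.Sublist w ∧ OrderIsoWord s σ

/-- `w` avoids the pattern `σ`: it contains no copy of `σ`. -/
def AvoidsPattern (w σ : List ℕ) : Prop := ¬ ContainsPattern w σ

/-- Membership in the family of permutation-word sets `R_{n,T}` generated by the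
template `T = (P, B)` (the length index `n` is just the length of the word).
`InR P B w` holds iff `w` is the empty word, a single-letter word, or the
concatenation of subwords `W_1, ..., W_t` (`t = |P|`, total length at least `2`) such that:
whenever `p_i > p_j` every element of `W_i` exceeds every element of `W_j`;
each `W_i` is order-isomorphic to a permutation word `V_i` that again satisfies `InR`;
and whenever `b_i = 0` the subword `W_i` has exactly one element. -/
inductive InR (P : List ℕ) (B : List Bool) : List ℕ → Prop where
  | nil : InR P B []
  | single (x : ℕ) : InR P B [x]
  | join (Ws Vs : List (List ℕ)) (hlen : Ws.length = P.length)
      (hVs : Vs.length = Ws.length)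
      (h2 : 2 ≤ Ws.flatten.length)
      (horder : ∀ (i j : ℕ) (hi : i < Ws.length) (hj : j < Ws.length),
          P[j]'(by omega) < P[i]'(by omega) →
          ∀ x ∈ Ws[i]'hi, ∀ y ∈ Ws[j]'hj, y < x)
      (hiso : ∀ (i : ℕ) (hi : i < Ws.length),
          IsPermWord (Vs[i]'(by omega)) ∧ OrderIsoWord (Ws[i]'hi) (Vs[i]'(by omega)))
      (hrec : ∀ (i : ℕ) (hi : i < Vs.length), InR P B (Vs[i]'hi))
      (hzero : ∀ (i : ℕ) (hi : i < Ws.length) (hb : i < B.length),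
          B[i]'hb = false → (Ws[i]'hi).length = 1) :
      InR P B Ws.flatten

/-- The set `R_{n,T}` of permutation words of length `n` generated by the template `T = (P,B)`. -/
def Rset (P : List ℕ) (B : List Bool) (n : ℕ) : Set (List ℕ) :=
  {w | w.length = n ∧ IsPermWord w ∧ InR P B w}


section Helpers

open List

lemma getDEq {l : List ℕ} {i : ℕ} {d : ℕ} (h : i < l.length) : l.getD i d = l[i] := by
  simp [List.getD_eq_getElem?_getD, List.getElem?_eq_getElem h]

lemma getDEqL {l : List (List ℕ)} {i : ℕ} (h : i < l.length) : l.getD i [] = l[i] := by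
  simp [List.getD_eq_getElem?_getD, List.getElem?_eq_getElem h]

lemma getDEqB {l : List Bool} {i : ℕ} (h : i < l.length) : l.getD i true = l[i] := by
  simp [List.getD_eq_getElem?_getD, List.getElem?_eq_getElem h]

lemma oiwRefl (u : List ℕ) : OrderIsoWord u u := ⟨rfl, fun _ _ _ _ _ _ => Iff.rfl⟩

lemma oiwSymm {u v : List ℕ} (h : OrderIsoWord u v) : OrderIsoWord v u :=
  ⟨h.1.symm, fun i j hi hj hi' hj' => (h.2 i j hi' hj' hi hj).symm⟩

lemma oiwTrans {u v w : List ℕ} (h1 : OrderIsoWord u v) (h2 : OrderIsoWord v w) :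
    OrderIsoWord u w := by
  obtain ⟨e1, c1⟩ := h1
  obtain ⟨e2, c2⟩ := h2
  refine ⟨e1.trans e2, fun i j hi hj hi' hj' => ?_⟩
  exact (c1 i j hi hj (by omega) (by omega)).trans (c2 i j (by omega) (by omega) hi' hj')

lemma oiwNil : OrderIsoWord [] [] := ⟨rfl, fun i j hi => by simp at hi⟩

lemma oiwShift (u : List ℕ) (c : ℕ) : OrderIsoWord u (u.map (· + c)) := by
  refine ⟨(List.length_map _).symm, fun i j hi hj hi' hj' => ?_⟩
  simp only [List.getElem_map]
  omega

lemma permNil : IsPermWord [] := by simp [IsPermWord]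

lemma permOne : IsPermWord [1] := by simp [IsPermWord]

lemma permMem {u : List ℕ} {x : ℕ} (h : IsPermWord u) (hx : x ∈ u) :
    1 ≤ x ∧ x ≤ u.length := by
  have := h.mem_iff.mp hx
  rw [List.mem_range'] at this
  obtain ⟨i, hi, rfl⟩ := this
  omega

lemma cpNil (w : List ℕ) : ContainsPattern w [] :=
  ⟨[], List.nil_sublist w, oiwNil⟩

lemma cpSingle {σ : List ℕ} (h : σ.length = 1) (x : ℕ) : ContainsPattern [x] σ := by
  refine ⟨[x], List.Sublist.refl _, ⟨by simp [h], fun i j hi hj hi' hj' => ?_⟩⟩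
  simp only [List.length_cons, List.length_nil] at hi hj
  have : i = 0 := by omega
  have : j = 0 := by omega
  subst this; subst ‹i = 0›
  exact iff_of_false (lt_irrefl _) (lt_irrefl _)

lemma cpLen {w σ : List ℕ} (h : ContainsPattern w σ) : σ.length ≤ w.length := by
  obtain ⟨s, hs, hiso⟩ := h
  calc σ.length = s.length := hiso.1.symm
    _ ≤ w.length := hs.length_le

lemma cpTransfer {w v σ : List ℕ} (h : OrderIsoWord w v) (hc : ContainsPattern w σ) :
    ContainsPattern v σ := by
  obtain ⟨s, hsub, hiso⟩ := hc
  obtain ⟨is, rfl, hpair⟩ := List.sublist_eq_map_getElem hsub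
  obtain ⟨hlen, hcmp⟩ := h
  have hpair' : (is.map (Fin.cast hlen)).Pairwise (· < ·) := by
    rw [List.pairwise_map]
    exact hpair.imp (fun h => h)
  refine ⟨(is.map (Fin.cast hlen)).map (v[·]), List.map_getElem_sublist hpair', ?_⟩
  refine oiwTrans ?_ hiso
  refine ⟨by simp, fun i j hi hj hi' hj' => ?_⟩
  simp only [List.length_map] at hi' hj'
  simp only [List.getElem_map, Fin.getElem_fin, Fin.coe_cast]
  exact (hcmp (is[i]) (is[j]) (is[i]).isLt (is[j]).isLt (by omega) (by omega)).symm

end Helpers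

section Helpers2
open List

lemma splitSublist : ∀ {L : List (List ℕ)} {s : List ℕ}, s <+ L.flatten →
    ∃ ss : List (List ℕ), ss.length = L.length ∧ ss.flatten = s ∧
      ∀ i (h1 : i < ss.length) (h2 : i < L.length), ss[i] <+ L[i] := by
  intro L
  induction L with
  | nil =>
    intro s h
    simp only [List.flatten_nil, List.sublist_nil] at h
    subst h
    exact ⟨[], rfl, rfl, fun i h1 h2 => by simp at h1⟩
  | cons W L ih =>
    intro s h
    rw [List.flatten_cons, List.sublist_append_iff] at h
    obtain ⟨s1, s2, rfl, h1, h2⟩ := h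
    obtain ⟨ss, hl, hf, hsub⟩ := ih h2
    refine ⟨s1 :: ss, by simp [hl], by simp [hf], ?_⟩
    intro i hi1 hi2
    cases i with
    | zero => simpa using h1
    | succ n =>
      simp only [List.getElem_cons_succ]
      exact hsub n (by simpa using hi1) (by simpa using hi2)

lemma flattenSublist : ∀ {As Bs : List (List ℕ)}, As.length = Bs.length →
    (∀ i (h1 : i < As.length) (h2 : i < Bs.length), As[i] <+ Bs[i]) →
    As.flatten <+ Bs.flatten := by
  intro As
  induction As with
  | nil =>
    intro Bs hlen _
    cases Bs with
    | nil => simp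
    | cons B Bs => simp at hlen
  | cons A As ih =>
    intro Bs hlen hsub
    cases Bs with
    | nil => simp at hlen
    | cons B Bs =>
      simp only [List.flatten_cons]
      have hAB : A <+ B := by exact hsub 0 (by simp) (by simp)
      have hrest : As.flatten <+ Bs.flatten := by
        refine ih (by simpa using hlen) (fun i h1 h2 => ?_)
        exact hsub (i+1) (by simpa using h1) (by simpa using h2)
      exact hAB.append hrest

lemma flattenDecomp : ∀ {As Bs : List (List ℕ)}, As.length = Bs.length →
    (∀ i (h1 : i < As.length) (h2 : i < Bs.length), (As[i]).length = (Bs[i]).length) →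
    ∀ q (hq : q < As.flatten.length) (hq' : q < Bs.flatten.length),
    ∃ (j : ℕ) (r : ℕ) (hj : j < As.length) (hj' : j < Bs.length) (hr : r < (As[j]'hj).length)
      (hr' : r < (Bs[j]'hj').length),
      As.flatten[q]'hq = (As[j]'hj)[r]'hr ∧ Bs.flatten[q]'hq' = (Bs[j]'hj')[r]'hr' := by
  intro As
  induction As with
  | nil => intro Bs _ _ q hq; simp at hq
  | cons A As ih =>
    intro Bs hlen hl q hq hq'
    cases Bs with
    | nil => simp at hlen
    | cons B Bs =>
      have hAB : A.length = B.length := by exact hl 0 (by simp) (by simp)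
      simp only [List.flatten_cons] at hq hq' ⊢
      by_cases hcase : q < A.length
      · refine ⟨0, q, by simp, by simp, by simpa using hcase, by simpa [← hAB] using hcase, ?_, ?_⟩
        · simp [List.getElem_append_left hcase]
        · simp [List.getElem_append_left (hAB ▸ hcase)]
      · push_neg at hcase
        have hq2 : q - A.length < As.flatten.length := by
          simp only [List.length_append] at hq; omega
        have hq2' : q - B.length < Bs.flatten.length := by
          simp only [List.length_append] at hq'; omega
        have hq2'' : q - A.length < Bs.flatten.length := by rw [← hAB] at hq2'; exact hq2'
        obtain ⟨j, r, hj, hj', hr, hr', e1, e2⟩ :=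
          ih (Bs := Bs) (by simpa using hlen)
            (fun i h1 h2 => by exact hl (i+1) (by simpa using h1) (by simpa using h2))
            (q - A.length) hq2 hq2''
        refine ⟨j+1, r, by simpa using hj, by simpa using hj', by simpa using hr,
          by simpa using hr', ?_, ?_⟩
        · rw [List.getElem_append_right hcase]
          simpa using e1
        · rw [List.getElem_append_right (by omega : B.length ≤ q)]
          simp only [List.getElem_cons_succ]
          have heq : q - B.length = q - A.length := by omega
          simp only [heq]
          exact e2

lemma oiwFlatten {As Bs : List (List ℕ)} (hlen : As.length = Bs.length)
    (hblock : ∀ i (h1 : i < As.length) (h2 : i < Bs.length), OrderIsoWord (As[i]) (Bs[i]))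
    (hcross : ∀ i j (hi : i < As.length) (hj : j < As.length) (hi' : i < Bs.length)
        (hj' : j < Bs.length), i ≠ j →
        ∀ x ∈ As[i], ∀ y ∈ As[j], ∀ x' ∈ Bs[i], ∀ y' ∈ Bs[j], (x < y ↔ x' < y')) :
    OrderIsoWord As.flatten Bs.flatten := by
  have hlens : ∀ i (h1 : i < As.length) (h2 : i < Bs.length),
      (As[i]).length = (Bs[i]).length := fun i h1 h2 => (hblock i h1 h2).1
  have hmapeq : As.map List.length = Bs.map List.length := by
    apply List.ext_getElem (by simp [hlen])
    intro i h1 h2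
    simp only [List.getElem_map]
    exact hlens i (by simpa using h1) (by simpa using h2)
  have hL : As.flatten.length = Bs.flatten.length := by
    rw [List.length_flatten, List.length_flatten, hmapeq]
  refine ⟨hL, fun p q hp hq hp' hq' => ?_⟩
  obtain ⟨j1, r1, hj1, hj1', hr1, hr1', e1, e1'⟩ := flattenDecomp hlen hlens p hp hp'
  obtain ⟨j2, r2, hj2, hj2', hr2, hr2', e2, e2'⟩ := flattenDecomp hlen hlens q hq hq'
  rw [e1, e1', e2, e2']
  by_cases hjj : j1 = j2
  · subst hjj
    exact (hblock j1 hj1 hj1').2 r1 r2 hr1 hr2 hr1' hr2'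
  · exact hcross j1 j2 hj1 hj2 hj1' hj2' hjj _ (List.getElem_mem hr1) _ (List.getElem_mem hr2)
      _ (List.getElem_mem hr1') _ (List.getElem_mem hr2')

end Helpers2

section Helpers3
open List

lemma permFlatten {α : Type*} {l₁ l₂ : List (List α)} (h : l₁.Perm l₂) :
    l₁.flatten.Perm l₂.flatten := by
  induction h with
  | nil => simp
  | cons x _ ih => simpa using ih.append_left x
  | swap x y l =>
    simp only [List.flatten_cons]
    rw [← List.append_assoc, ← List.append_assoc]
    exact (List.perm_append_comm).append_right _
  | trans _ _ ih1 ih2 => exact ih1.trans ih2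

lemma chunksPerm {ι : Type} (W : ι → List ℕ) (o m : ι → ℕ)
    (hW : ∀ i, (W i).Perm (List.range' (o i + 1) (m i))) :
    ∀ (K : List ι) (c : ℕ),
      (∀ r (hr : r < K.length), o (K[r]) = c + ((K.take r).map m).sum) →
      (K.map W).flatten.Perm (List.range' (c+1) ((K.map m).sum)) := by
  intro K
  induction K with
  | nil => intro c _; simp
  | cons i K ih =>
    intro c hpre
    have h0 : o i = c := by
      have := hpre 0 (by simp)
      simp only [List.take_zero, List.map_nil, List.sum_nil, Nat.add_zero] at this
      exact this
    simp only [List.map_cons, List.flatten_cons, List.sum_cons]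
    have h1 : (W i).Perm (List.range' (c+1) (m i)) := h0 ▸ hW i
    have h2 : (K.map W).flatten.Perm (List.range' (c + m i + 1) ((K.map m).sum)) := by
      refine ih (c + m i) (fun r hr => ?_)
      have := hpre (r+1) (by simpa using Nat.add_lt_add_right hr 1)
      simpa [Nat.add_assoc] using this
    have h3 := h1.append h2
    have h4 : List.range' (c+1) (m i) ++ List.range' (c + m i + 1) ((K.map m).sum)
        = List.range' (c+1) (m i + (K.map m).sum) := by
      have := List.range'_append_1 (s := c+1) (m := m i) (n := (K.map m).sum)
      rw [show c + 1 + m i = c + m i + 1 by omega] at this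
      exact this
    rwa [h4] at h3

lemma sumTakeMono (L : List ℕ) {a b : ℕ} (h : a ≤ b) : (L.take a).sum ≤ (L.take b).sum := by
  have : L.take b = L.take a ++ (L.drop a).take (b - a) := by
    rw [← List.take_add (l := L) (i := a) (j := b - a), show a + (b - a) = b by omega]
  rw [this, List.sum_append]
  omega

lemma pairLeSum (f : ℕ → ℕ) {i j t : ℕ} (hij : i < j) (hj : j < t) :
    f i + f j ≤ ((List.range t).map f).sum := by
  have hsub : [i, j] <+ List.range t := by
    have hp : ([⟨i, by simpa using lt_trans hij hj⟩, ⟨j, by simpa using hj⟩] :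
        List (Fin (List.range t).length)).Pairwise (· < ·) := by
      refine List.Pairwise.cons ?_ (by simp)
      intro b hb
      simp only [List.mem_singleton] at hb
      subst hb
      simp only [Fin.mk_lt_mk]
      exact hij
    have := List.map_getElem_sublist hp
    simpa using this
  have := (hsub.map f).sum_le_sum (by simp)
  simpa using this

lemma sumAlmostZero : ∀ (L : List ℕ) (i : ℕ) (hi : i < L.length),
    (∀ j (hj : j < L.length), j ≠ i → L[j] = 0) → L.sum = L[i] := by
  intro L
  induction L with
  | nil => intro i hi; simp at hi
  | cons x L ih =>
    intro i hi hz
    cases i with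
    | zero =>
      simp only [List.getElem_cons_zero, List.sum_cons]
      have : L.sum = 0 := by
        apply List.sum_eq_zero
        intro y hy
        obtain ⟨n, hn, rfl⟩ := List.mem_iff_getElem.mp hy
        exact hz (n+1) (by simpa using hn) (by omega)
      omega
    | succ n =>
      simp only [List.getElem_cons_succ, List.sum_cons]
      have hx : x = 0 := by exact hz 0 (by simp) (by omega)
      rw [hx, ih n (by simpa using hi) (fun j hj hne => by
        exact hz (j+1) (by simpa using hj) (by omega))]
      omega

lemma mapGetDRange {α : Type} (l : List α) (d : α) :
    (List.range l.length).map (fun i => l.getD i d) = l := by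
  induction l with
  | nil => simp
  | cons x l ih =>
    rw [List.length_cons, List.range_succ_eq_map]
    simp only [List.map_cons, List.getD_cons_zero, List.map_map]
    have : ((fun i => (x :: l).getD i d) ∘ Nat.succ) = fun i => l.getD i d := by
      funext i; simp
    rw [this, ih]

lemma countFalseSum (B : List Bool) :
    (B.map (fun b => if b = false then 1 else 0)).sum = B.count false := by
  induction B with
  | nil => simp
  | cons b B ih =>
    cases b <;> simp [List.count_cons, ih] <;> omega

end Helpers3

section Reassemble
open List

variable {P : List ℕ} {B : List Bool}

/-- Reassembly: given a family of permutation words in `R`, one for each position of `P`,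
glue them (suitably shifted) into a single permutation word in `R`. -/
lemma reassemble (hPnd : P.Nodup) (hPB : B.length = P.length)
    (U : ℕ → List ℕ) (hU1 : ∀ i, IsPermWord (U i)) (hU2 : ∀ i, InR P B (U i))
    (hz : ∀ i (h : i < B.length), B[i] = false → (U i).length = 1)
    (htwo : ∃ i j, i < P.length ∧ j < P.length ∧ i ≠ j ∧ U i ≠ [] ∧ U j ≠ []) :
    ∀ o : ℕ → ℕ, (o = fun i =>
        (((List.range P.length).filter (fun j => P.getD j 0 < P.getD i 0)).map
          (fun j => (U j).length)).sum) →
    IsPermWord (((List.range P.length).map (fun i => (U i).map (· + o i))).flatten) ∧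
    InR P B (((List.range P.length).map (fun i => (U i).map (· + o i))).flatten) ∧
    (∀ i j, i < P.length → j < P.length → P.getD i 0 < P.getD j 0 →
      o i + (U i).length ≤ o j) := by
  intro o ho
  set t := P.length with htdef
  set m : ℕ → ℕ := fun i => (U i).length with hm
  set π : ℕ → ℕ := fun i => P.getD i 0 with hπ
  -- basic: entries of shifted block i lie in (o i, o i + m i]
  have hblk : ∀ i, ∀ x ∈ (U i).map (· + o i), o i < x ∧ x ≤ o i + m i := by
    intro i x hx
    obtain ⟨y, hy, rfl⟩ := List.mem_map.mp hx
    have := permMem (hU1 i) hy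
    have hmi : m i = (U i).length := rfl
    omega
  -- the sorted index list
  set J : List ℕ := (List.range t).mergeSort (fun a b => π a ≤ π b) with hJ
  have hJperm : J.Perm (List.range t) := List.mergeSort_perm _ _
  have hJlen : J.length = t := by simpa using hJperm.length_eq
  have hJmem : ∀ {i}, i ∈ J → i < t := fun h => by
    have := hJperm.mem_iff.mp h; simpa using this
  have hJnodup : J.Nodup := hJperm.symm.nodup (List.nodup_range (n := t))
  have hJsorted : J.Pairwise (fun a b => π a ≤ π b) := by
    have := List.pairwise_mergeSort (le := fun a b => decide (π a ≤ π b))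
      (by intro a b c; simpa using Nat.le_trans)
      (by intro a b; simpa using Nat.le_total (π a) (π b)) (List.range t)
    exact this.imp (by simp)
  have hπinj : ∀ {a b}, a < t → b < t → π a = π b → a = b := by
    intro a b ha hb hab
    have hab' := hab
    simp only [hπ] at hab'
    rw [getDEq (show a < P.length by omega), getDEq (show b < P.length by omega)] at hab'
    exact (List.Nodup.getElem_inj_iff hPnd).mp hab'
  have hJstrict : ∀ (r s : ℕ) (hr : r < J.length) (hs : s < J.length), r < s →
      π (J[r]) < π (J[s]) := by
    intro r s hr hs hrs
    have hle : π (J[r]) ≤ π (J[s]) := List.pairwise_iff_getElem.mp hJsorted r s hr hs hrs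
    have hne : J[r] ≠ J[s] := by
      intro hcon
      have := (List.Nodup.getElem_inj_iff hJnodup).mp hcon
      omega
    have h1 : J[r] < t := hJmem (List.getElem_mem hr)
    have h2 : J[s] < t := hJmem (List.getElem_mem hs)
    rcases Nat.lt_or_ge (π (J[r])) (π (J[s])) with h | h
    · exact h
    · exact absurd (hπinj h1 h2 (by omega)) hne
  -- offsets along J are prefix sums
  have hOffGen : ∀ (r : ℕ) (v : ℕ), r ≤ J.length →
      (∀ (s : ℕ) (hs : s < J.length), (π (J[s]) < v ↔ s < r)) →
      J.filter (fun j => π j < v) = J.take r := by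
    intro r v hrle hv
    have e : J.filter (fun j => π j < v)
        = (J.take r).filter (fun j => π j < v) ++ (J.drop r).filter (fun j => π j < v) := by
      rw [← List.filter_append, List.take_append_drop]
    rw [e]
    have h1 : (J.take r).filter (fun j => π j < v) = J.take r := by
      rw [List.filter_eq_self]
      intro x hx
      obtain ⟨sIdx, hs, rfl⟩ := List.mem_iff_getElem.mp hx
      have hs0 := hs
      simp only [List.length_take] at hs0
      simp only [List.getElem_take]
      simpa using (hv sIdx (by omega)).mpr (by omega)
    have h2 : (J.drop r).filter (fun j => π j < v) = [] := by
      rw [List.filter_eq_nil_iff]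
      intro x hx
      obtain ⟨sIdx, hs, rfl⟩ := List.mem_iff_getElem.mp hx
      have hs0 := hs
      simp only [List.length_drop] at hs0
      simp only [List.getElem_drop]
      simp only [decide_eq_true_eq]
      intro hcon
      have := (hv (r + sIdx) (by omega)).mp hcon
      omega
    rw [h1, h2, List.append_nil]
  have hOffJ : ∀ (r : ℕ) (hr : r < J.length), o (J[r]) = ((J.take r).map m).sum := by
    intro r hr
    have hv : ∀ (s : ℕ) (hs : s < J.length), (π (J[s]) < π (J[r]) ↔ s < r) := by
      intro s hs
      constructor
      · intro h
        by_contra hcon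
        push_neg at hcon
        rcases Nat.eq_or_lt_of_le hcon with h' | h'
        · subst h'; omega
        · have := hJstrict r s hr hs h'; omega
      · intro h
        exact hJstrict s r hs hr h
    have hfilter := hOffGen r (π (J[r])) (by omega) hv
    have hpermf : ((List.range t).filter (fun j => π j < π (J[r]))).Perm
        (J.filter (fun j => π j < π (J[r]))) := (hJperm.filter _).symm
    calc o (J[r]) = (((List.range t).filter (fun j => π j < π (J[r]))).map m).sum := by
          rw [ho]
      _ = ((J.filter (fun j => π j < π (J[r]))).map m).sum := (hpermf.map m).sum_eq
      _ = ((J.take r).map m).sum := by rw [hfilter]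
  -- order of offsets
  have hOrd : ∀ i j, i < t → j < t → π i < π j → o i + m i ≤ o j := by
    intro i j hi hj hij
    obtain ⟨ri, hri, hri2⟩ := List.mem_iff_getElem.mp (hJperm.mem_iff.mpr (by simpa using hi))
    obtain ⟨rj, hrj, hrj2⟩ := List.mem_iff_getElem.mp (hJperm.mem_iff.mpr (by simpa using hj))
    have hrij : ri < rj := by
      rcases Nat.lt_trichotomy ri rj with h | h | h
      · exact h
      · exfalso
        subst h
        have : i = j := hri2.symm.trans hrj2
        subst this
        exact lt_irrefl _ hij
      · exfalso; have := hJstrict rj ri hrj hri h; rw [hri2, hrj2] at this; omega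
    have e1 : o i = ((J.map m).take ri).sum := by
      rw [← hri2, hOffJ ri hri, List.map_take]
    have e2 : o j = ((J.map m).take rj).sum := by
      rw [← hrj2, hOffJ rj hrj, List.map_take]
    have e3 : ((J.map m).take (ri+1)).sum = ((J.map m).take ri).sum + m i := by
      rw [List.sum_take_succ (L := J.map m) ri (by simpa using hri)]
      congr 1
      simp only [List.getElem_map]
      exact congrArg m hri2
    have e4 : ((J.map m).take (ri+1)).sum ≤ ((J.map m).take rj).sum :=
      sumTakeMono _ (by omega)
    omega
  set Wf : ℕ → List ℕ := fun i => (U i).map (· + o i) with hWf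
  have hsumlen : (((List.range t).map Wf).flatten).length = ((List.range t).map m).sum := by
    rw [List.length_flatten, List.map_map]
    congr 1
    apply List.map_congr_left
    intro a _
    simp [hWf, hm]
  have hgetblk : ∀ (i : ℕ) (hi : i < ((List.range t).map Wf).length),
      ((List.range t).map Wf)[i] = Wf i := by
    intro i hi
    simp
  refine ⟨?_, ?_, ?_⟩
  · -- IsPermWord
    have hchunk : ∀ i, (Wf i).Perm (List.range' (o i + 1) (m i)) := by
      intro i
      have h1 : (U i).Perm (List.range' 1 (m i)) := hU1 i
      have h2 := h1.map (· + o i)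
      have h3 : (List.range' 1 (m i)).map (· + o i) = List.range' (o i + 1) (m i) := by
        have h4 := List.map_add_range' (a := o i) 1 (m i) 1
        rw [← h4]
        apply List.map_congr_left
        intro a _
        omega
      rwa [h3] at h2
    have hmain := chunksPerm Wf o m hchunk J 0 (by intro r hr; simpa using hOffJ r hr)
    have hp2 : ((List.range t).map Wf).Perm (J.map Wf) := (hJperm.map Wf).symm
    have hp3 := (permFlatten hp2).trans hmain
    rw [IsPermWord, hsumlen, ← (hJperm.map m).sum_eq]
    simpa using hp3
  · -- InR
    refine InR.join ((List.range t).map Wf) ((List.range t).map U)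
      (by simp [htdef]) (by simp) ?_ ?_ ?_ ?_ ?_
    · -- 2 ≤ length
      obtain ⟨i, j, hi, hj, hij, hUi, hUj⟩ := htwo
      have hmi : 1 ≤ m i := by
        have : 0 < (U i).length := List.length_pos_iff.mpr hUi
        exact this
      have hmj : 1 ≤ m j := by
        have : 0 < (U j).length := List.length_pos_iff.mpr hUj
        exact this
      rw [hsumlen]
      rcases Nat.lt_or_ge i j with h | h
      · have := pairLeSum m h hj; omega
      · have hji : j < i := by omega
        have := pairLeSum m hji hi; omega
    · -- order between blocks
      intro i j hi hj hP x hx y hy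
      simp only [List.length_map, List.length_range] at hi hj
      rw [hgetblk i (by simpa using hi)] at hx
      rw [hgetblk j (by simpa using hj)] at hy
      have hπij : π j < π i := by
        simp only [hπ]
        rw [getDEq (show j < P.length by omega), getDEq (show i < P.length by omega)]
        exact hP
      have hOij := hOrd j i (by omega) (by omega) hπij
      have hbx := hblk i x hx
      have hby := hblk j y hy
      omega
    · -- iso blocks
      intro i hi
      simp only [List.length_map, List.length_range] at hi
      constructor
      · rw [show ((List.range t).map U)[i]'(by simpa using hi) = U i by simp]
        exact hU1 i
      · rw [hgetblk i (by simpa using hi),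
          show ((List.range t).map U)[i]'(by simpa using hi) = U i by simp]
        exact oiwSymm (oiwShift (U i) (o i))
    · -- recursive
      intro i hi
      simp only [List.length_map, List.length_range] at hi
      rw [show ((List.range t).map U)[i]'(by simpa using hi) = U i by simp]
      exact hU2 i
    · -- zeros
      intro i hi hb hfalse
      simp only [List.length_map, List.length_range] at hi
      rw [hgetblk i (by simpa using hi)]
      simp only [hWf, List.length_map]
      exact hz i hb hfalse
  · intro i j hi hj hij
    have : π i < π j := by
      simp only [hπ]
      exact hij
    exact hOrd i j hi hj this
end Reassemble

section Main
open List

theorem mainLemma {P : List ℕ} {B : List Bool} (hPnd : P.Nodup) (hPB : B.length = P.length)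
    {w : List ℕ} (hw : InR P B w) :
    ∀ σ : List ℕ, 0 < σ.length → ContainsPattern w σ →
    ∃ u : List ℕ, u.length ≤ (σ.length - 1) * (B.count false + 1) + 1 ∧
      IsPermWord u ∧ InR P B u ∧ ContainsPattern u σ := by
  induction hw with
  | nil =>
    intro σ hσ hc
    have := cpLen hc
    simp only [List.length_nil] at this
    omega
  | single x =>
    intro σ hσ hc
    have h1 : σ.length = 1 := by
      have := cpLen hc
      simp at this
      omega
    exact ⟨[1], by simp, permOne, InR.single 1, cpSingle h1 1⟩
  | join Ws Vs hlen hVs h2 horder hiso hrec hzero ih =>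
    intro σ hσ hc
    by_cases hone : σ.length = 1
    · exact ⟨[1], by simp, permOne, InR.single 1, cpSingle hone 1⟩
    have hσ2 : 2 ≤ σ.length := by omega
    obtain ⟨s, hssub, hsiso⟩ := hc
    obtain ⟨ss, hsslen, hssflat, hsssub⟩ := splitSublist hssub
    set t := P.length with htdef
    set k := B.count false with hkdef
    have hWst : Ws.length = t := hlen
    have hsst : ss.length = t := by omega
    have htB : B.length = t := hPB
    have hsσ : s.length = σ.length := hsiso.1
    -- each block piece is a sublist of s
    have hblksub : ∀ i (hi : i < t), ss[i]'(by omega) <+ s := by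
      intro i hi
      rw [← hssflat]
      exact List.sublist_flatten_of_mem (List.getElem_mem (by omega))
    by_cases hbig : ∃ i, ∃ (hi : i < t), (ss[i]'(by omega)).length = σ.length
    · -- the whole copy sits inside one block
      obtain ⟨i, hi, hilen⟩ := hbig
      have heq : ss[i]'(by omega) = s := (hblksub i hi).eq_of_length (by omega)
      have hWs : ContainsPattern (Ws[i]'(by omega)) σ :=
        ⟨s, heq ▸ hsssub i (by omega) (by omega), hsiso⟩
      obtain ⟨hVperm, hViso⟩ := hiso i (by omega)
      exact ih i (by omega) σ hσ (cpTransfer hViso hWs)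
    · -- the copy is split among at least two blocks
      push_neg at hbig
      have hlt : ∀ i (hi : i < t), (ss[i]'(by omega)).length < σ.length := by
        intro i hi
        have h1 := (hblksub i hi).length_le
        have h2 := hbig i hi
        omega
      set c : ℕ → ℕ := fun i => (ss.getD i []).length with hcdef
      set β : ℕ → Bool := fun i => B.getD i true with hβdef
      set g : ℕ → ℕ := fun i =>
        if β i = false then 1 else if c i = 0 then 0 else (c i - 1) * (k+1) + 1 with hgdef
      have hcval : ∀ i, c i = (ss.getD i []).length := fun i => rfl
      have hcgetd : ∀ i (hi : i < t), ss.getD i [] = ss[i]'(by omega) := by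
        intro i hi
        exact getDEqL (by omega)
      have hβgetd : ∀ i (hi : i < t), β i = B[i]'(by omega) := by
        intro i hi
        exact getDEqB (by omega)
      -- build the small words for each block
      have key : ∀ i : ℕ, ∃ u : List ℕ, IsPermWord u ∧ InR P B u ∧
          (i < t → ContainsPattern u (ss.getD i []) ∧ u.length ≤ g i ∧
            (β i = false → u.length = 1)) := by
        intro i
        by_cases hit : i < t
        · by_cases hb : β i = false
          · -- forced singleton block
            refine ⟨[1], permOne, InR.single 1, fun _ => ⟨?_, ?_, fun _ => rfl⟩⟩
            · have hW1 : (Ws[i]'(by omega)).length = 1 :=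
                hzero i (by omega) (by omega) (by rw [← hβgetd i hit]; exact hb)
              have hle : (ss.getD i []).length ≤ 1 := by
                rw [hcgetd i hit]
                have := (hsssub i (by omega) (by omega)).length_le
                omega
              rcases Nat.le_one_iff_eq_zero_or_eq_one.mp hle with h0 | h1
              · rw [List.length_eq_zero_iff.mp h0]
                exact cpNil [1]
              · exact cpSingle h1 1
            · simp [hgdef, hb]
          · by_cases hcc : c i = 0
            · refine ⟨[], permNil, InR.nil, fun _ => ⟨?_, ?_, fun hf => absurd hf hb⟩⟩
              · have : ss.getD i [] = [] := by
                  have : (ss.getD i []).length = 0 := hcc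
                  exact List.length_eq_zero_iff.mp this
                rw [this]
                exact cpNil []
              · simp [hgdef, hb, hcc]
            · -- use the induction hypothesis on V_i
              have hsubW : ss.getD i [] <+ Ws[i]'(by omega) := by
                rw [hcgetd i hit]
                exact hsssub i (by omega) (by omega)
              have hcpW : ContainsPattern (Ws[i]'(by omega)) (ss.getD i []) :=
                ⟨ss.getD i [], hsubW, oiwRefl _⟩
              obtain ⟨hVperm, hViso⟩ := hiso i (by omega)
              have hcpV : ContainsPattern (Vs[i]'(by omega)) (ss.getD i []) :=
                cpTransfer hViso hcpW
              have hpos : 0 < (ss.getD i []).length := by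
                have := hcval i
                omega
              obtain ⟨u, hu1, hu2, hu3, hu4⟩ :=
                ih i (by omega) (ss.getD i []) hpos hcpV
              refine ⟨u, hu2, hu3, fun _ => ⟨hu4, ?_, fun hf => absurd hf hb⟩⟩
              have hgval : g i = (c i - 1) * (k+1) + 1 := by
                simp only [hgdef]
                rw [if_neg hb, if_neg hcc]
              rw [hgval, hcval i]
              exact hu1
        · exact ⟨[], permNil, InR.nil, fun h => absurd h hit⟩
      choose U hU1 hU2 hU3 using key
      set m : ℕ → ℕ := fun i => (U i).length with hmdef
      -- two distinct nonempty blocks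
      have hsumc : ((List.range t).map c).sum = σ.length := by
        have e1 : (List.range t).map c = ss.map List.length := by
          have e2 : (List.range ss.length).map (fun i => ss.getD i []) = ss :=
            mapGetDRange ss []
          rw [hcdef]
          rw [show (fun i => (ss.getD i []).length)
            = List.length ∘ (fun i => ss.getD i []) from rfl]
          rw [← List.map_map, ← hsst, e2]
        rw [e1, ← List.length_flatten, hssflat, hsσ]
      have hex1 : ∃ i, i < t ∧ c i ≠ 0 := by
        by_contra hcon
        push_neg at hcon
        have : ((List.range t).map c).sum = 0 := by
          apply List.sum_eq_zero
          intro x hx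
          obtain ⟨i, hi, rfl⟩ := List.mem_map.mp hx
          exact hcon i (by simpa using hi)
        omega
      obtain ⟨i0, hi0, hc0⟩ := hex1
      have hex2 : ∃ j, j < t ∧ j ≠ i0 ∧ c j ≠ 0 := by
        by_contra hcon
        push_neg at hcon
        have hall : ∀ j (hj : j < ((List.range t).map c).length), j ≠ i0 →
            ((List.range t).map c)[j] = 0 := by
          intro j hj hne
          have hjt : j < t := by simpa using hj
          simp only [List.getElem_map, List.getElem_range]
          exact hcon j hjt hne
        have := sumAlmostZero ((List.range t).map c) i0 (by simpa using hi0) hall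
        simp only [List.getElem_map, List.getElem_range] at this
        have hci0 : c i0 < σ.length := by
          rw [hcval i0, hcgetd i0 hi0]
          exact hlt i0 hi0
        omega
      obtain ⟨j0, hj0, hji, hcj0⟩ := hex2
      -- blocks with a nonzero piece are nonempty
      have hne : ∀ i, i < t → c i ≠ 0 → U i ≠ [] := by
        intro i hi hci
        have h1 := (hU3 i hi).1
        have h2 := cpLen h1
        intro hcon
        rw [hcon] at h2
        simp only [List.length_nil] at h2
        rw [hcval i] at hci
        omega
      -- reassemble
      have hras := reassemble hPnd hPB U hU1 hU2
        (fun i hi hb => (hU3 i (by omega)).2.2 (by rw [hβgetd i (by omega)]; exact hb))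
        ⟨i0, j0, by omega, by omega, by omega, hne i0 hi0 hc0, hne j0 hj0 hcj0⟩
        _ rfl
      obtain ⟨huperm, huInR, hOrdo⟩ := hras
      set o : ℕ → ℕ := fun i =>
        (((List.range P.length).filter (fun j => P.getD j 0 < P.getD i 0)).map
          (fun j => (U j).length)).sum with hodef
      set u : List ℕ := ((List.range P.length).map (fun i => (U i).map (· + o i))).flatten
        with hudef
      -- the length of u
      have hulen : u.length = ((List.range t).map m).sum := by
        rw [hudef, List.length_flatten, List.map_map]
        congr 1
        apply List.map_congr_left
        intro a _
        simp [hmdef]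
      -- membership bounds for shifted blocks
      have hmemS : ∀ i, ∀ x ∈ U i, 1 ≤ x ∧ x ≤ m i := fun i x hx => permMem (hU1 i) hx
      -- the copy of σ inside u
      have hcopy : ContainsPattern u σ := by
        choose S hS1 hS2 using fun i => (em (i < t)).elim
          (fun h => ((hU3 i h).1 : ContainsPattern (U i) (ss.getD i [])))
          (fun h => (⟨[], List.nil_sublist _, by
              rw [List.getD_eq_default _ _ (by omega)]; exact oiwNil⟩ :
            ContainsPattern (U i) (ss.getD i [])))
        refine ⟨((List.range t).map (fun i => (S i).map (· + o i))).flatten, ?_, ?_⟩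
        · rw [hudef]
          apply flattenSublist (by simp [htdef])
          intro i h1 h2
          simp only [List.getElem_map, List.getElem_range]
          exact (hS1 _).map _
        · refine oiwTrans ?_ hsiso
          rw [← hssflat]
          apply oiwFlatten (by simp [hsst])
          · -- blockwise
            intro i h1 h2
            have hit : i < t := by simpa using h1
            have eA : (((List.range t).map (fun i => (S i).map (· + o i)))[i]'h1)
                = (S i).map (· + o i) := by
              simp only [List.getElem_map, List.getElem_range]
            rw [eA]
            have hS2' : OrderIsoWord (S i) (ss[i]'(by omega)) := by
              have h5 := hS2 i
              rwa [hcgetd i hit] at h5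
            exact oiwTrans (oiwSymm (oiwShift (S i) (o i))) hS2'
          · -- cross blocks
            intro a b ha hb ha' hb' hab x hx y hy x' hx' y' hy'
            simp only [List.getElem_map, List.getElem_range] at hx hy
            have hat : a < t := by simpa using ha
            have hbt : b < t := by simpa using hb
            obtain ⟨xv, hxv, rfl⟩ := List.mem_map.mp hx
            obtain ⟨yv, hyv, rfl⟩ := List.mem_map.mp hy
            have hxb := hmemS a xv ((hS1 a).subset hxv)
            have hyb := hmemS b yv ((hS1 b).subset hyv)
            have hx'W : x' ∈ Ws[a]'(by omega) :=
              (hsssub a (by omega) (by omega)).subset hx'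
            have hy'W : y' ∈ Ws[b]'(by omega) :=
              (hsssub b (by omega) (by omega)).subset hy'
            have hPab : P.getD a 0 ≠ P.getD b 0 := by
              rw [getDEq (show a < P.length by omega), getDEq (show b < P.length by omega)]
              intro hcon
              exact hab ((List.Nodup.getElem_inj_iff hPnd).mp hcon)
            rcases Nat.lt_or_ge (P.getD a 0) (P.getD b 0) with hPlt | hPge
            · -- block a below block b
              have h1 : o a + (U a).length ≤ o b := hOrdo a b (by omega) (by omega) hPlt
              have h2 : xv + o a < yv + o b := by
                have hma : m a = (U a).length := rfl
                have hmb : m b = (U b).length := rfl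
                omega
              have h3 : x' < y' := by
                refine horder b a (by omega) (by omega) ?_ y' hy'W x' hx'W
                rw [getDEq (show a < P.length by omega),
                  getDEq (show b < P.length by omega)] at hPlt
                exact hPlt
              exact iff_of_true h2 h3
            · have hPlt : P.getD b 0 < P.getD a 0 := by omega
              have h1 : o b + (U b).length ≤ o a := hOrdo b a (by omega) (by omega) hPlt
              have h2 : ¬ (xv + o a < yv + o b) := by
                have hma : m a = (U a).length := rfl
                have hmb : m b = (U b).length := rfl
                omega
              have h3 : ¬ (x' < y') := by
                have := horder a b (by omega) (by omega) (by
                  rw [getDEq (show a < P.length by omega),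
                    getDEq (show b < P.length by omega)] at hPlt
                  exact hPlt) x' hx'W y' hy'W
                omega
              exact iff_of_false h2 h3
      -- the length bound
      have hbound : u.length ≤ (σ.length - 1) * (k + 1) + 1 := by
        set γ : ℕ → ℕ := fun i => if β i = false then 1 else 0 with hγdef
        set α : ℕ → ℕ := fun i => if c i = 0 then 0 else 1 with hαdef
        have hpoint : ∀ i ∈ List.range t, g i + k * α i ≤ γ i + (k+1) * c i := by
          intro i _
          by_cases hb : β i = false
          · by_cases hcc : c i = 0
            · simp [hgdef, hγdef, hαdef, hb, hcc]
            · have h1 : 1 ≤ c i := by omega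
              have h2 : (k+1) * 1 ≤ (k+1) * c i := Nat.mul_le_mul_left _ h1
              simp only [hgdef, hγdef, hαdef, hb, hcc, if_true, if_false]
              omega
          · by_cases hcc : c i = 0
            · simp [hgdef, hγdef, hαdef, hb, hcc]
            · obtain ⟨c', hc'⟩ : ∃ c', c i = c' + 1 := ⟨c i - 1, by omega⟩
              have he : (k+1) * (c'+1) = c' * (k+1) + (k+1) := by ring
              have hgv : g i = c' * (k+1) + 1 := by
                simp only [hgdef]
                rw [if_neg hb, if_neg hcc, hc']
                simp
              have hαv : α i = 1 := by
                simp only [hαdef]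
                rw [if_neg hcc]
              have hγv : γ i = 0 := by
                simp only [hγdef]
                rw [if_neg hb]
              rw [hgv, hαv, hγv, hc']
              omega
        have hsum1 := List.sum_le_sum hpoint
        rw [List.sum_map_add, List.sum_map_add] at hsum1
        rw [List.sum_map_mul_left, List.sum_map_mul_left] at hsum1
        -- the pieces
        have hsumγ : ((List.range t).map γ).sum = k := by
          have e1 : (List.range t).map γ
              = (B.map (fun b => if b = false then 1 else 0)) := by
            rw [hγdef, hβdef]
            rw [show (fun i => if B.getD i true = false then (1:ℕ) else 0)
              = (fun b => if b = false then (1:ℕ) else 0) ∘ (fun i => B.getD i true) from rfl]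
            rw [← List.map_map, ← htB, mapGetDRange B true]
          rw [e1, countFalseSum]
        have hsumα : 2 ≤ ((List.range t).map α).sum := by
          have hαi0 : α i0 = 1 := by simp [hαdef, hc0]
          have hαj0 : α j0 = 1 := by simp [hαdef, hcj0]
          rcases Nat.lt_or_ge i0 j0 with h | h
          · have := pairLeSum α h hj0; omega
          · have hji0 : j0 < i0 := by omega
            have := pairLeSum α hji0 hi0; omega
        have hmg : ∀ i ∈ List.range t, m i ≤ g i := by
          intro i hi
          exact (hU3 i (by simpa using hi)).2.1
        have hsum2 : ((List.range t).map m).sum ≤ ((List.range t).map g).sum :=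
          List.sum_le_sum hmg
        rw [hulen]
        rw [hsumγ, hsumc] at hsum1
        -- final arithmetic
        obtain ⟨l2, hl2⟩ : ∃ l2, σ.length = l2 + 2 := ⟨σ.length - 2, by omega⟩
        rw [hl2] at hsum1 ⊢
        have e1 : (k+1) * (l2+2) = (k+1)*l2 + 2*k + 2 := by ring
        have e2 : (l2 + 2 - 1) * (k+1) + 1 = (k+1)*l2 + k + 2 := by
          rw [show l2 + 2 - 1 = l2 + 1 by omega]; ring
        have h3 : k * 2 ≤ k * ((List.range t).map α).sum := Nat.mul_le_mul_left k hsumα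
        omega
      exact ⟨u, hbound, huperm, huInR, hcopy⟩

end Main

/-- Let `T = (P, B)` be a template whose binary string `B` has exactly
`k` zeros, and let `σ` be a pattern of length `l > 0`.  If for some `n` the set `R_{n,T}`
contains a permutation containing `σ` as a pattern, then for some `m ≤ (l-1)(k+1)+1` the
set `R_{m,T}` also contains a permutation containing `σ` as a pattern. -/
theorem template_pattern_small_witness
    (P : List ℕ) (B : List Bool) (hP : IsPermWord P) (hP1 : 1 ≤ P.length)
    (hPB : B.length = P.length)
    (k : ℕ) (hk : B.count false = k)
    (σ : List ℕ) (hσ : IsPermWord σ) (l : ℕ) (hl : σ.length = l) (hl0 : 0 < l)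
    (hex : ∃ n : ℕ, ∃ w ∈ Rset P B n, ContainsPattern w σ) :
    ∃ m ≤ (l - 1) * (k + 1) + 1, ∃ w ∈ Rset P B m, ContainsPattern w σ := by
  obtain ⟨n, w, hwmem, hcont⟩ := hex
  obtain ⟨hwlen, hwperm, hwin⟩ := hwmem
  have hPnd : P.Nodup := hP.nodup_iff.mpr (List.nodup_range' (s := 1) (n := P.length))
  obtain ⟨u, hb, hup, huin, huc⟩ := mainLemma hPnd hPB hwin σ (by omega) hcont
  rw [hl, hk] at hb
  exact ⟨u.length, hb, u, ⟨rfl, hup, huin⟩, huc⟩
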